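/- Let S ⊆ ℝ, let g : ℝ → ℝ, and let u : ℝ → ℝ be twice differentiable on S and satisfy the ordinary differential equation u''(z) + z(1 − 2g(z))u'(z) − u(z) = 0 for every z ∈ S. Define V(t,x) := √(1−t) · u( x/√(1−t) ) for t < 1 and x ∈ ℝ. Then for every t < 1 and x ∈ ℝ with x/√(1−t) ∈ S, V satisfies the partial differential equation ∂_t V(t,x) + (1/2) ∂²_{xx} V(t,x) − x · ( g(x/√(1−t)) / (1−t) ) · ∂_x V(t,x) = 0. -/

import Mathlib

open MeasureTheory Set Real

/-- the scaling reduction. If `u` is twice differentiable on `S` (with first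
and second derivatives `u'` and `u''`) and satisfies `u'' + z(1−2g(z))u' − u = 0` on `S`,
then `V(t,x) := √(1−t)·u(x/√(1−t))` satisfies
`∂_t V + (1/2)∂²ₓₓV − x·(g(x/√(1−t))/(1−t))·∂ₓV = 0`
at every `(t,x)` with `t < 1` and `x/√(1−t) ∈ S`. -/
theorem scaling_reduction_pde
    (S : Set ℝ) (g u u' u'' : ℝ → ℝ)
    (hu : ∀ z ∈ S, HasDerivAt u (u' z) z)
    (hu' : ∀ z ∈ S, HasDerivAt u' (u'' z) z)
    (hode : ∀ z ∈ S, u'' z + z * (1 - 2 * g z) * u' z - u z = 0)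
    (t x : ℝ) (ht : t < 1) (hmem : x / Real.sqrt (1 - t) ∈ S) :
    ∃ Vt Vx Vxx : ℝ,
      HasDerivAt (fun s : ℝ => Real.sqrt (1 - s) * u (x / Real.sqrt (1 - s))) Vt t ∧
      HasDerivAt (fun y : ℝ => Real.sqrt (1 - t) * u (y / Real.sqrt (1 - t))) Vx x ∧
      HasDerivAt (fun y : ℝ => u' (y / Real.sqrt (1 - t))) Vxx x ∧
      Vt + (1/2) * Vxx - x * (g (x / Real.sqrt (1 - t)) / (1 - t)) * Vx = 0 := by
  set s := Real.sqrt (1 - t) with hs_def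
  have h1t : (0:ℝ) < 1 - t := by linarith
  have hs : 0 < s := Real.sqrt_pos.mpr h1t
  have hsne : s ≠ 0 := ne_of_gt hs
  have hs2 : s ^ 2 = 1 - t := Real.sq_sqrt h1t.le
  set z := x / s with hz_def
  -- derivative of 1 - s
  have h1 : HasDerivAt (fun s : ℝ => 1 - s) (-1) t := by
    simpa using (hasDerivAt_id t).const_sub 1
  -- derivative of sqrt(1 - s)
  have h2 : HasDerivAt (fun s : ℝ => Real.sqrt (1 - s)) (-(1 / (2 * s))) t := by
    have := (Real.hasDerivAt_sqrt (ne_of_gt h1t)).comp t h1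
    simpa [hs_def, Function.comp_def] using this.congr_deriv (by ring)
  -- derivative of (sqrt(1-s))⁻¹
  have h3 : HasDerivAt (fun s : ℝ => (Real.sqrt (1 - s))⁻¹) (1 / (2 * s ^ 3)) t := by
    have := h2.inv hsne
    simp only [Pi.inv_def] at this
    refine this.congr_deriv ?_
    rw [← hs_def]
    field_simp
  -- derivative of x / sqrt(1-s)
  have h4 : HasDerivAt (fun s : ℝ => x / Real.sqrt (1 - s)) (x / (2 * s ^ 3)) t := by
    have := h3.const_mul x
    simpa [div_eq_mul_inv, mul_comm, mul_assoc, mul_left_comm] using this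
  -- derivative of u(x / sqrt(1-s)) in s
  have h5 : HasDerivAt (fun s : ℝ => u (x / Real.sqrt (1 - s))) (u' z * (x / (2 * s ^ 3))) t :=
    (hu z hmem).comp t h4
  have hVt : HasDerivAt (fun s : ℝ => Real.sqrt (1 - s) * u (x / Real.sqrt (1 - s)))
      (-(1 / (2 * s)) * u z + s * (u' z * (x / (2 * s ^ 3)))) t := h2.mul h5
  -- x-direction
  have hin : HasDerivAt (fun y : ℝ => y / s) (1 / s) x := by
    simpa using (hasDerivAt_id x).div_const s
  have hVx : HasDerivAt (fun y : ℝ => Real.sqrt (1 - t) * u (y / Real.sqrt (1 - t)))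
      (s * (u' z * (1 / s))) x := by
    exact (((hu z hmem).comp x hin)).const_mul s
  have hVxx : HasDerivAt (fun y : ℝ => u' (y / Real.sqrt (1 - t))) (u'' z * (1 / s)) x :=
    (hu' z hmem).comp x hin
  refine ⟨_, _, _, hVt, hVx, hVxx, ?_⟩
  have hode' := hode z hmem
  have hx : x = z * s := by rw [hz_def, div_mul_cancel₀ x hsne]
  have key : -(1 / (2 * s)) * u z + s * (u' z * (x / (2 * s ^ 3))) +
      1 / 2 * (u'' z * (1 / s)) - x * (g z / (1 - t)) * (s * (u' z * (1 / s)))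
      = (u'' z + z * (1 - 2 * g z) * u' z - u z) / (2 * s) := by
    rw [hx, ← hs2]
    field_simp
    ring
  rw [key, hode']
  simp
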